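/- For every integer n ≥ 1, every tuple of entire functions f_0, …, f_n : ℂ → ℂ with no common zero, every ε > 0 and every N > 0, there exist polynomials p_0, p_1, …, p_n whose coefficients all lie in the field of Gaussian rationals ℚ(i) = {x + iy : x, y ∈ ℚ}, such that: (i) for every z with |z| ≤ N, the vector (p_0(z),…,p_n(z)) is nonzero and d_FS((p_0(z),…,p_n(z)), (f_0(z),…,f_n(z))) < ε; and (ii) deg p_0 > deg p_j for every j ∈ {1,…,n}. -/

import Mathlib

/-- The Hermitian norm of a vector in `ℂ^m`. -/
noncomputable def hermNorm {m : ℕ} (a : Fin m → ℂ) : ℝ :=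
  Real.sqrt (∑ i, ‖a i‖ ^ 2)

/-- The Fubini–Study (chordal) distance between two points of `ℂP^{m-1}` given by
nonzero homogeneous-coordinate vectors in `ℂ^m`. -/
noncomputable def dFS {m : ℕ} (a b : Fin m → ℂ) : ℝ :=
  Real.sqrt (∑ i, ∑ j, if i < j then ‖a i * b j - a j * b i‖ ^ 2 else 0)
    / (hermNorm a * hermNorm b)

/-- A complex number is a Gaussian rational if its real and imaginary parts are
rational. -/
def IsGaussianRational (c : ℂ) : Prop := ∃ x y : ℚ, c = (x : ℂ) + (y : ℂ) * Complex.I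

lemma gauss_near (c : ℂ) {η : ℝ} (hη : 0 < η) :
    ∃ r : ℂ, IsGaussianRational r ∧ ‖r - c‖ < η := by
  obtain ⟨x, hx⟩ := exists_rat_near c.re (by positivity : (0:ℝ) < η/2)
  obtain ⟨y, hy⟩ := exists_rat_near c.im (by positivity : (0:ℝ) < η/2)
  refine ⟨(x:ℂ) + (y:ℂ) * Complex.I, ⟨x, y, rfl⟩, ?_⟩
  have h := Complex.norm_le_abs_re_add_abs_im ((x:ℂ) + (y:ℂ) * Complex.I - c)
  have h1 : ((x:ℂ) + (y:ℂ) * Complex.I - c).re = (x:ℝ) - c.re := by simp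
  have h2 : ((x:ℂ) + (y:ℂ) * Complex.I - c).im = (y:ℝ) - c.im := by simp
  rw [h1, h2] at h
  rw [abs_sub_comm] at hx hy
  calc ‖_‖ ≤ |(x:ℝ) - c.re| + |(y:ℝ) - c.im| := h
    _ < η/2 + η/2 := add_lt_add hx hy
    _ = η := by ring

lemma hermNorm_eq_norm {m : ℕ} (a : Fin m → ℂ) :
    hermNorm a = ‖(WithLp.equiv 2 (Fin m → ℂ)).symm a‖ := by
  simp [hermNorm, EuclideanSpace.norm_eq]

lemma hermNorm_nonneg {m : ℕ} (a : Fin m → ℂ) : 0 ≤ hermNorm a := Real.sqrt_nonneg _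

lemma hermNorm_pos {m : ℕ} (a : Fin m → ℂ) (h : ∃ i, a i ≠ 0) : 0 < hermNorm a := by
  obtain ⟨i, hi⟩ := h
  apply Real.sqrt_pos.mpr
  apply Finset.sum_pos' (fun j _ => by positivity)
  refine ⟨i, Finset.mem_univ i, ?_⟩
  have : ‖a i‖ ≠ 0 := by simpa using hi
  positivity

lemma hermNorm_pos_exists {m : ℕ} (a : Fin m → ℂ) (h : 0 < hermNorm a) : ∃ i, a i ≠ 0 := by
  by_contra hc
  push_neg at hc
  have : hermNorm a = 0 := by simp [hermNorm, hc]
  linarith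

lemma hermNorm_triangle {m : ℕ} (a b : Fin m → ℂ) :
    hermNorm b ≤ hermNorm a + hermNorm (fun i => a i - b i) := by
  have key := norm_sub_norm_le ((WithLp.equiv 2 (Fin m → ℂ)).symm b)
    ((WithLp.equiv 2 (Fin m → ℂ)).symm a)
  have h1 : (WithLp.equiv 2 (Fin m → ℂ)).symm b - (WithLp.equiv 2 (Fin m → ℂ)).symm a
      = (WithLp.equiv 2 (Fin m → ℂ)).symm (fun i => b i - a i) := rfl
  rw [h1] at key
  have h2 : hermNorm (fun i => a i - b i) = hermNorm (fun i => b i - a i) := by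
    simp only [hermNorm]
    congr 1
    apply Finset.sum_congr rfl
    intro i _
    rw [← norm_neg (a i - b i), neg_sub]
  rw [hermNorm_eq_norm a, hermNorm_eq_norm b, h2, hermNorm_eq_norm (fun i => b i - a i)]
  linarith

lemma numer_le {m : ℕ} (a b : Fin m → ℂ) :
    (∑ i, ∑ j, if i < j then ‖a i * b j - a j * b i‖ ^ 2 else 0)
      ≤ 4 * (∑ i, ‖a i - b i‖ ^ 2) * (∑ i, ‖b i‖ ^ 2) := by
  have key : ∀ i j : Fin m, (if i < j then ‖a i * b j - a j * b i‖ ^ 2 else 0)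
      ≤ 2 * (‖a i - b i‖ ^ 2 * ‖b j‖ ^ 2
           + ‖a j - b j‖ ^ 2 * ‖b i‖ ^ 2) := by
    intro i j
    have habs : ‖a i * b j - a j * b i‖
        ≤ ‖a i - b i‖ * ‖b j‖
          + ‖a j - b j‖ * ‖b i‖ := by
      have h1 : a i * b j - a j * b i = (a i - b i) * b j + (-((a j - b j) * b i)) := by ring
      rw [h1]
      refine (norm_add_le _ _).trans ?_
      rw [norm_neg, norm_mul, norm_mul]
    have h0 : (0:ℝ) ≤ ‖a i * b j - a j * b i‖ := norm_nonneg _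
    have h0' : (0:ℝ) ≤ ‖a i - b i‖ * ‖b j‖ := by positivity
    have h0'' : (0:ℝ) ≤ ‖a j - b j‖ * ‖b i‖ := by positivity
    split
    · nlinarith [sq_nonneg (‖a i - b i‖ * ‖b j‖
        - ‖a j - b j‖ * ‖b i‖)]
    · positivity
  calc (∑ i, ∑ j, if i < j then ‖a i * b j - a j * b i‖ ^ 2 else 0)
      ≤ ∑ i, ∑ j, 2 * (‖a i - b i‖ ^ 2 * ‖b j‖ ^ 2
           + ‖a j - b j‖ ^ 2 * ‖b i‖ ^ 2) :=
        Finset.sum_le_sum fun i _ => Finset.sum_le_sum fun j _ => key i j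
    _ = 4 * (∑ i, ‖a i - b i‖ ^ 2) * (∑ i, ‖b i‖ ^ 2) := by
        simp only [mul_add, Finset.sum_add_distrib, ← Finset.mul_sum, ← Finset.sum_mul]
        ring

lemma dFS_le {m : ℕ} (a b : Fin m → ℂ) (ha : 0 < hermNorm a) (hb : 0 < hermNorm b) :
    dFS a b ≤ 2 * hermNorm (fun i => a i - b i) / hermNorm a := by
  have hsum_d : (0:ℝ) ≤ ∑ i, ‖a i - b i‖ ^ 2 :=
    Finset.sum_nonneg fun i _ => by positivity
  have hsum_b : (0:ℝ) ≤ ∑ i, ‖b i‖ ^ 2 :=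
    Finset.sum_nonneg fun i _ => by positivity
  have he : hermNorm (fun i => a i - b i) ^ 2 = ∑ i, ‖a i - b i‖ ^ 2 :=
    Real.sq_sqrt hsum_d
  have hbsq : hermNorm b ^ 2 = ∑ i, ‖b i‖ ^ 2 := Real.sq_sqrt hsum_b
  have he0 : 0 ≤ hermNorm (fun i => a i - b i) := Real.sqrt_nonneg _
  have hnum : Real.sqrt (∑ i, ∑ j, if i < j then ‖a i * b j - a j * b i‖ ^ 2 else 0)
      ≤ 2 * hermNorm (fun i => a i - b i) * hermNorm b := by
    have h1 : (∑ i, ∑ j, if i < j then ‖a i * b j - a j * b i‖ ^ 2 else 0)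
        ≤ (2 * hermNorm (fun i => a i - b i) * hermNorm b) ^ 2 := by
      have := numer_le a b
      nlinarith [this]
    calc Real.sqrt _ ≤ Real.sqrt ((2 * hermNorm (fun i => a i - b i) * hermNorm b) ^ 2) :=
          Real.sqrt_le_sqrt h1
      _ = 2 * hermNorm (fun i => a i - b i) * hermNorm b := by
          rw [Real.sqrt_sq (by positivity)]
  rw [dFS]
  calc _ ≤ (2 * hermNorm (fun i => a i - b i) * hermNorm b) / (hermNorm a * hermNorm b) := by
        exact div_le_div_of_nonneg_right hnum (by positivity) |>.trans_eq rfl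
    _ = 2 * hermNorm (fun i => a i - b i) / hermNorm a := by
        field_simp

lemma exists_gaussian_poly_approx (g : ℂ → ℂ) (hg : Differentiable ℂ g)
    {δ N : ℝ} (hδ : 0 < δ) (hN : 0 < N) :
    ∃ q : Polynomial ℂ, (∀ k, IsGaussianRational (q.coeff k)) ∧
      ∀ z : ℂ, ‖z‖ ≤ N → ‖q.eval z - g z‖ < δ := by
  set R : NNReal := ⟨N, hN.le⟩ + 1 with hRdef
  have hRpos : 0 < R := add_pos_of_nonneg_of_pos zero_le one_pos
  have hball := hg.hasFPowerSeriesOnBall (0 : ℂ) hRpos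
  have htu := hball.tendstoUniformlyOn' (r' := R) (by simp)
  rw [Metric.tendstoUniformlyOn_iff] at htu
  obtain ⟨n, hn⟩ := (htu (δ/2) (by positivity)).exists
  set p := cauchyPowerSeries g 0 R with hp
  set c : ℕ → ℂ := fun k => p.coeff k with hc
  set B : ℝ := N + 1 with hB
  have hB1 : (1:ℝ) ≤ B := by simp [hB]; linarith
  have hBn : (0:ℝ) < B ^ n := by positivity
  set δ' : ℝ := δ / (2 * (n+1) * B^n) with hδ'def
  have hδ' : 0 < δ' := by
    apply div_pos hδ
    positivity
  choose r hr1 hr2 using fun k => gauss_near (c k) hδ'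
  set q : Polynomial ℂ := ∑ k ∈ Finset.range n, Polynomial.C (r k) * Polynomial.X ^ k with hq
  refine ⟨q, ?_, ?_⟩
  · intro k
    have hco : q.coeff k = if k ∈ Finset.range n then r k else 0 := by
      rw [hq, Polynomial.finset_sum_coeff]
      simp only [Polynomial.coeff_C_mul, Polynomial.coeff_X_pow, mul_ite, mul_one, mul_zero]
      rw [Finset.sum_ite_eq (Finset.range n) k r]
    rw [hco]
    split
    · exact hr1 k
    · exact ⟨0, 0, by simp⟩
  · intro z hz
    have hzB : ‖z‖ ≤ B := by rw [hB]; linarith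
    have hzball : z ∈ Metric.ball (0:ℂ) R := by
      rw [Metric.mem_ball, Complex.dist_eq, sub_zero]
      have : (R : ℝ) = N + 1 := rfl
      rw [this]; linarith
    have hgz := hn z hzball
    have hps : p.partialSum n (z - 0) = ∑ k ∈ Finset.range n, c k * z ^ k := by
      rw [sub_zero, FormalMultilinearSeries.partialSum]
      refine Finset.sum_congr rfl fun k _ => ?_
      rw [FormalMultilinearSeries.apply_eq_prod_smul_coeff, smul_eq_mul]
      simp [mul_comm, hc]
    have hqe : q.eval z = ∑ k ∈ Finset.range n, r k * z ^ k := by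
      rw [hq, Polynomial.eval_finset_sum]
      simp
    have hdiff : ‖q.eval z - p.partialSum n (z - 0)‖ ≤ δ / 2 := by
      rw [hqe, hps, ← Finset.sum_sub_distrib]
      have h1 : ∀ k ∈ Finset.range n,
          ‖r k * z ^ k - c k * z ^ k‖ ≤ δ' * B ^ n := by
        intro k hk
        rw [← sub_mul, norm_mul, norm_pow]
        have hk' : k ≤ n := (Finset.mem_range.mp hk).le
        have h2 : ‖z‖ ^ k ≤ B ^ n :=
          (pow_le_pow_left₀ (norm_nonneg z) hzB k).trans (pow_le_pow_right₀ hB1 hk')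
        have h3 : (0:ℝ) ≤ ‖z‖ ^ k := by positivity
        exact mul_le_mul (hr2 k).le h2 h3 hδ'.le
      have hkey : δ' * B ^ n = δ / (2 * ((n:ℝ) + 1)) := by
        rw [hδ'def]
        field_simp
      have hfin : (n:ℝ) * (δ' * B ^ n) ≤ δ / 2 := by
        rw [hkey, mul_div_assoc']
        rw [div_le_div_iff₀ (by positivity) (by norm_num : (0:ℝ) < 2)]
        nlinarith [hδ.le]
      calc ‖∑ k ∈ Finset.range n, (r k * z ^ k - c k * z ^ k)‖
          ≤ ∑ k ∈ Finset.range n, ‖r k * z ^ k - c k * z ^ k‖ :=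
            norm_sum_le _ _
        _ ≤ ∑ _k ∈ Finset.range n, δ' * B ^ n := Finset.sum_le_sum h1
        _ = (n:ℝ) * (δ' * B ^ n) := by rw [Finset.sum_const, Finset.card_range]; simp
        _ ≤ δ / 2 := hfin
    have htri : ‖q.eval z - g z‖
        ≤ ‖q.eval z - p.partialSum n (z - 0)‖
          + ‖p.partialSum n (z - 0) - g z‖ := by
      have h4 : q.eval z - g z = (q.eval z - p.partialSum n (z - 0))
          + (p.partialSum n (z - 0) - g z) := by ring
      rw [h4]
      exact norm_add_le _ _
    have h5 : ‖p.partialSum n (z - 0) - g z‖ < δ / 2 := by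
      rw [Complex.dist_eq] at hgz
      rw [← norm_neg, neg_sub]
      exact hgz
    linarith

/-- Runge-type approximation for entire curves, with Gaussian rational
coefficients. Any entire curve `[f₀ : ⋯ : fₙ] : ℂ → ℂP^n` can be approximated on
`{|z| ≤ N}`, in the Fubini–Study distance, by a rational curve `[p₀ : ⋯ : pₙ]` whose
polynomials have all coefficients in `ℚ(i)` and satisfy `deg p₀ > deg p_j`, `j ≠ 0`. -/
theorem stmt3 (n : ℕ) (hn : 1 ≤ n) (f : Fin (n + 1) → ℂ → ℂ)
    (hf : ∀ i, Differentiable ℂ (f i)) (hnc : ∀ z : ℂ, ∃ i, f i z ≠ 0)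
    (ε N : ℝ) (hε : 0 < ε) (hN : 0 < N) :
    ∃ p : Fin (n + 1) → Polynomial ℂ,
      (∀ i : Fin (n + 1), ∀ k : ℕ, IsGaussianRational ((p i).coeff k)) ∧
      (∀ z : ℂ, ‖z‖ ≤ N →
        (∃ i, (p i).eval z ≠ 0) ∧
        dFS (fun i => (p i).eval z) (fun i => f i z) < ε) ∧
      (∀ j : Fin (n + 1), j ≠ 0 → (p j).degree < (p 0).degree) := by
  classical
  have hcont : Continuous fun z : ℂ => hermNorm (fun i => f i z) := by
    unfold hermNorm
    exact Real.continuous_sqrt.comp (continuous_finset_sum _ fun i _ =>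
      (continuous_norm.comp (hf i).continuous).pow 2)
  obtain ⟨z0, hz0mem, hz0min⟩ := (isCompact_closedBall (0:ℂ) N).exists_isMinOn
    ⟨0, by simp [hN.le]⟩ hcont.continuousOn
  set m0 : ℝ := hermNorm (fun i => f i z0) with hm0def
  have hm0 : 0 < m0 := hermNorm_pos _ (hnc z0)
  set δ : ℝ := min (m0/2) (ε * m0 / 8) with hδdef
  have hδpos : 0 < δ := lt_min (by positivity) (by positivity)
  set δ' : ℝ := δ / (n+1) with hδ'def
  have hδ'pos : 0 < δ' := by positivity
  choose q hq1 hq2 using fun i : Fin (n+1) =>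
    exists_gaussian_poly_approx (f i) (hf i) (by positivity : (0:ℝ) < δ'/2) hN
  set M : ℕ := (Finset.univ.sup fun j : Fin (n+1) => (q j).natDegree) + 1 with hM
  have hMgt : ∀ j, (q j).natDegree < M := fun j =>
    Nat.lt_succ_of_le (Finset.le_sup (f := fun j : Fin (n+1) => (q j).natDegree)
      (Finset.mem_univ j))
  have hNM : (0:ℝ) < N ^ M + 1 := by positivity
  obtain ⟨ρ, hρ0, hρ1⟩ := exists_rat_btwn (show (0:ℝ) < (δ'/2) / (N^M + 1) by positivity)
  set cc : ℂ := ((ρ:ℝ) : ℂ) with hcc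
  have hρ0' : (0:ℝ) < (ρ:ℝ) := by exact_mod_cast hρ0
  have hccne : cc ≠ 0 := by
    rw [hcc]
    exact_mod_cast hρ0'.ne'
  set p : Fin (n+1) → Polynomial ℂ := fun i =>
    if i = 0 then q 0 + Polynomial.C cc * Polynomial.X ^ M else q i with hpdef
  have hp0 : p 0 = q 0 + Polynomial.C cc * Polynomial.X ^ M := by simp [hpdef]
  have hpj : ∀ j : Fin (n+1), j ≠ 0 → p j = q j := fun j hj => by simp [hpdef, hj]
  have hCX : (Polynomial.C cc * Polynomial.X ^ M).degree = ((M : ℕ) : WithBot ℕ) :=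
    Polynomial.degree_C_mul_X_pow M hccne
  have hdegq : ∀ j, (q j).degree < ((M : ℕ) : WithBot ℕ) := by
    intro j
    calc (q j).degree ≤ ((q j).natDegree : WithBot ℕ) := Polynomial.degree_le_natDegree
      _ < ((M : ℕ) : WithBot ℕ) := by exact_mod_cast hMgt j
  have hdeg0 : (p 0).degree = ((M : ℕ) : WithBot ℕ) := by
    rw [hp0, Polynomial.degree_add_eq_right_of_degree_lt (by rw [hCX]; exact hdegq 0), hCX]
  refine ⟨p, ?_, ?_, ?_⟩
  · -- Gaussian rational coefficients
    intro i k
    by_cases hi : i = 0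
    · subst hi
      rw [hp0, Polynomial.coeff_add, Polynomial.coeff_C_mul, Polynomial.coeff_X_pow]
      by_cases hk : k = M
      · subst hk
        rw [Polynomial.coeff_eq_zero_of_natDegree_lt (hMgt 0)]
        simp only [if_pos rfl, mul_one, zero_add]
        exact ⟨ρ, 0, by rw [hcc]; push_cast; ring⟩
      · rw [if_neg hk, mul_zero, add_zero]
        exact hq1 0 k
    · rw [hpj i hi]
      exact hq1 i k
  · -- closeness
    intro z hz
    set a : Fin (n+1) → ℂ := fun i => (p i).eval z with hadef
    set b : Fin (n+1) → ℂ := fun i => f i z with hbdef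
    have hzmem : z ∈ Metric.closedBall (0:ℂ) N := by
      rw [Metric.mem_closedBall, Complex.dist_eq, sub_zero]; exact hz
    have hbm : m0 ≤ hermNorm b := isMinOn_iff.mp hz0min z hzmem
    have herr : ∀ i, ‖a i - b i‖ ≤ δ' := by
      intro i
      by_cases hi : i = 0
      · subst hi
        have h1 : a 0 = (q 0).eval z + cc * z ^ M := by
          simp [hadef, hp0]
        have h2 := hq2 0 z hz
        have h3 : ‖cc * z ^ M‖ ≤ δ'/2 := by
          rw [norm_mul, norm_pow]
          have hac : ‖cc‖ = (ρ:ℝ) := by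
            rw [hcc, Complex.norm_real, Real.norm_eq_abs, abs_of_pos hρ0']
          have h4 : ‖z‖ ^ M ≤ N ^ M :=
            pow_le_pow_left₀ (norm_nonneg z) hz M
          rw [hac]
          have h5 : (0:ℝ) ≤ ‖z‖ ^ M := by positivity
          have h6 : (ρ:ℝ) * (N^M+1) < δ'/2 := by
            rw [← lt_div_iff₀ hNM]; exact hρ1
          nlinarith [mul_le_mul_of_nonneg_left h4 hρ0'.le]
        have h6 : a 0 - b 0 = ((q 0).eval z - f 0 z) + cc * z ^ M := by
          rw [h1, hbdef]; ring
        calc ‖a 0 - b 0‖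
            ≤ ‖(q 0).eval z - f 0 z‖ + ‖cc * z ^ M‖ := by
              rw [h6]; exact norm_add_le _ _
          _ ≤ δ'/2 + δ'/2 := add_le_add h2.le h3
          _ = δ' := by ring
      · have h1 : a i - b i = (q i).eval z - f i z := by
          rw [hadef, hbdef]
          simp only [hpj i hi]
        rw [h1]
        have := hq2 i z hz
        linarith
    have he : hermNorm (fun i => a i - b i) ≤ δ := by
      have h1 : (∑ i, ‖a i - b i‖ ^ 2) ≤ ((n:ℝ)+1) * δ'^2 := by
        calc (∑ i, ‖a i - b i‖ ^ 2) ≤ ∑ _i : Fin (n+1), δ'^2 :=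
              Finset.sum_le_sum fun i _ => by
                have := herr i
                nlinarith [norm_nonneg (a i - b i)]
          _ = ((n:ℝ)+1) * δ'^2 := by
              rw [Finset.sum_const, Finset.card_univ, Fintype.card_fin]
              push_cast
              ring
      have h2 : ((n:ℝ)+1) * δ'^2 ≤ δ^2 := by
        have he1 : ((n:ℝ)+1) * δ'^2 = δ^2 / ((n:ℝ)+1) := by
          rw [hδ'def]
          field_simp
        rw [he1]
        exact div_le_self (by positivity) (by push_cast; linarith [Nat.cast_nonneg (α := ℝ) n])
      calc hermNorm (fun i => a i - b i)
          ≤ Real.sqrt (δ^2) := Real.sqrt_le_sqrt (h1.trans h2)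
        _ = δ := Real.sqrt_sq hδpos.le
    have hδle : δ ≤ m0/2 := min_le_left _ _
    have ha2 : m0/2 ≤ hermNorm a := by
      have := hermNorm_triangle a b
      linarith
    have hapos : 0 < hermNorm a := lt_of_lt_of_le (by positivity) ha2
    refine ⟨hermNorm_pos_exists a hapos, ?_⟩
    have hd := dFS_le a b hapos (lt_of_lt_of_le hm0 hbm)
    have h7 : 2 * hermNorm (fun i => a i - b i) / hermNorm a ≤ 2*δ/(m0/2) :=
      div_le_div₀ (by positivity) (by linarith) (by positivity) ha2
    have h8 : 2*δ/(m0/2) = 4*δ/m0 := by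
      field_simp
      ring
    have h9 : 4*δ/m0 ≤ ε/2 := by
      rw [div_le_iff₀ hm0]
      have := min_le_right (m0/2) (ε * m0 / 8)
      nlinarith
    calc dFS a b ≤ 2 * hermNorm (fun i => a i - b i) / hermNorm a := hd
      _ ≤ 2*δ/(m0/2) := h7
      _ = 4*δ/m0 := h8
      _ ≤ ε/2 := h9
      _ < ε := by linarith
  · -- degrees
    intro j hj
    rw [hpj j hj, hdeg0]
    exact hdegq j
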